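/- arXiv:1805.11187 — 4 statements merged into one kernel-verified Lean document; each statement's English description precedes it below -/
import Mathlib

section
/- Let $s \in C^2(X \times \bar Y)$ be non-degenerate (i.e. $D^2_{xy}s(x,y)$, an $m \times n$ matrix with $m \ge n$, has rank $n$ everywhere). Suppose $v$ is twice differentiable at $y = F(x)$, $F$ is differentiable at $x$, and $[D^2 v(F(x)) - D^2_{yy}s(x,F(x))] DF(x) = D^2_{xy}s(x,F(x))^T$. Then the $n \times n$ matrix $D^2 v(F(x)) - D^2_{yy}s(x,F(x))$ is invertible, the $n$-dimensional Jacobian $JF(x) := \det^{1/2}[DF(x) DF(x)^T]$ is positive, and $JF(x) = \sqrt{\det[D^2_{xy}s\, (D^2_{xy}s)^T]} / \det[D^2 v(F(x)) - D^2_{yy}s(x,F(x))]$, where the matrices are evaluated at $(x, F(x))$. -/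
lemma psd_det_nonneg {n : ℕ} {A : Matrix (Fin n) (Fin n) ℝ} (h : A.PosSemidef) :
    0 ≤ A.det := by
  rw [h.1.det_eq_prod_eigenvalues]
  exact Finset.prod_nonneg fun i _ => h.eigenvalues_nonneg i

/-- Jacobian identity for unequal-dimensional optimal transport: if
`M = D²v(F x) - D²_yy s(x, F x)` is positive semidefinite, `D²_xy s` has full rank `n ≤ m`,
and `M ⬝ DF = (D²_xy s)ᵀ`, then `M` is invertible, the `n`-dimensional Jacobian
`JF = √det(DF DFᵀ)` is positive, and `JF = √det((D²_xy s)ᵀ D²_xy s) / det M`. -/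
theorem stmt2 {m n : ℕ} (hmn : n ≤ m)
    (M : Matrix (Fin n) (Fin n) ℝ)
    (DF : Matrix (Fin n) (Fin m) ℝ)
    (Sxy : Matrix (Fin m) (Fin n) ℝ)
    (hrank : Sxy.rank = n)
    (hpos : M.PosSemidef)
    (heq : M * DF = Sxy.transpose) :
    IsUnit M.det ∧
    0 < Real.sqrt (DF * DF.transpose).det ∧
    Real.sqrt (DF * DF.transpose).det
      = Real.sqrt (Sxy.transpose * Sxy).det / M.det := by
  classical
  set A := Sxy.transpose * Sxy with hA
  -- A is invertible: it has full rank n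
  have hArank : A.rank = n := by
    rw [hA, Matrix.rank_transpose_mul_self]; exact hrank
  have hAunit : IsUnit A := by
    have hsurj : Function.Surjective A.mulVecLin := by
      rw [← LinearMap.range_eq_top]
      apply Submodule.eq_top_of_finrank_eq
      simpa [Module.finrank_pi, Matrix.rank] using hArank
    have hbij : Function.Bijective A.mulVecLin :=
      ⟨(LinearMap.injective_iff_surjective).2 hsurj, hsurj⟩
    have : Function.Injective A.mulVec := hbij.1
    exact Matrix.mulVec_injective_iff_isUnit.mp this
  have hAdet : A.det ≠ 0 := by
    have := (Matrix.isUnit_iff_isUnit_det A).mp hAunit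
    exact this.ne_zero
  -- A is posSemidef, so det A > 0
  have hApsd : A.PosSemidef := by
    have := Matrix.posSemidef_conjTranspose_mul_self Sxy
    rwa [Matrix.conjTranspose_eq_transpose_of_trivial] at this
  have hAdetpos : 0 < A.det := lt_of_le_of_ne (psd_det_nonneg hApsd) (Ne.symm hAdet)
  -- key identity : M * (DF * DFᵀ) * M = A
  have hMsym : M.transpose = M := by
    have := hpos.1
    rwa [Matrix.IsHermitian, Matrix.conjTranspose_eq_transpose_of_trivial] at this
  have hkey : M * (DF * DF.transpose) * M = A := by
    have : (M * DF) * (M * DF).transpose = A := by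
      rw [heq, hA, Matrix.transpose_transpose]
    calc M * (DF * DF.transpose) * M
        = (M * DF) * (DF.transpose * M) := by
          rw [Matrix.mul_assoc, Matrix.mul_assoc, Matrix.mul_assoc]
      _ = (M * DF) * (M * DF).transpose := by
          rw [Matrix.transpose_mul, hMsym]
      _ = A := this
  have hdetkey : M.det * (DF * DF.transpose).det * M.det = A.det := by
    rw [← hkey, Matrix.det_mul, Matrix.det_mul]
  -- det M ≠ 0
  have hMdet : M.det ≠ 0 := by
    intro h
    rw [h, zero_mul, mul_zero] at hdetkey
    exact hAdet hdetkey.symm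
  have hMdetpos : 0 < M.det := lt_of_le_of_ne (psd_det_nonneg hpos) (Ne.symm hMdet)
  -- det (DF * DFᵀ) = det A / (det M)^2
  have hDFdet : (DF * DF.transpose).det = A.det / (M.det * M.det) := by
    field_simp
    nlinarith [hdetkey]
  have hDFpos : 0 < (DF * DF.transpose).det := by
    rw [hDFdet]
    positivity
  refine ⟨hMdet.isUnit, Real.sqrt_pos.mpr hDFpos, ?_⟩
  rw [hDFdet, Real.sqrt_div hAdetpos.le, Real.sqrt_mul_self hMdetpos.le]
end

section
/- Let $Q, Q'$ be symmetric $n \times n$ matrices and $S$ a symmetric $n \times n$ matrix with $0 < Q - S \le \Theta I$ and $Q' \ge Q$. Then $\det[Q' - S] \ge \det[Q - S] \cdot (1 + \Theta^{-1} \operatorname{tr}[Q' - Q])$. -/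
open Matrix

private lemma aux_trace_nonneg {n : ℕ} {M : Matrix (Fin n) (Fin n) ℝ} (hM : M.PosSemidef) :
    0 ≤ M.trace := by
  rw [Matrix.trace]
  refine Finset.sum_nonneg fun i _ => ?_
  have := hM.diag_nonneg (i := i)
  simpa [Matrix.diag, Matrix.mulVec_single, dotProduct, Pi.single_apply] using this

private lemma aux_one_add_sum_le_prod {n : ℕ} {f : Fin n → ℝ} (hf : ∀ i, 0 ≤ f i) :
    1 + ∑ i, f i ≤ ∏ i, (1 + f i) := by
  classical
  have : ∀ s : Finset (Fin n), 1 + ∑ i ∈ s, f i ≤ ∏ i ∈ s, (1 + f i) := by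
    intro s
    refine Finset.induction_on s (by simp) ?_
    intro a s ha ih
    rw [Finset.sum_insert ha, Finset.prod_insert ha]
    have h1 : 0 ≤ f a := hf a
    have h2 : 0 ≤ ∑ i ∈ s, f i := Finset.sum_nonneg fun i _ => hf i
    nlinarith [ih]
  exact this Finset.univ

private lemma aux_det_one_add {n : ℕ} {M : Matrix (Fin n) (Fin n) ℝ} (hM : M.PosSemidef) :
    1 + M.trace ≤ (1 + M).det := by
  classical
  have hH := hM.1
  set U := (hH.eigenvectorUnitary : Matrix (Fin n) (Fin n) ℝ) with hU
  set D := Matrix.diagonal (RCLike.ofReal ∘ hH.eigenvalues : Fin n → ℝ) with hD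
  have hspec : M = U * D * star U := hH.spectral_theorem
  have hUU : U * star U = 1 := (Matrix.mem_unitaryGroup_iff).mp hH.eigenvectorUnitary.2
  have hUU' : star U * U = 1 := (Matrix.mem_unitaryGroup_iff').mp hH.eigenvectorUnitary.2
  have h1M : 1 + M = U * (1 + D) * star U := by
    rw [Matrix.mul_add, Matrix.add_mul, Matrix.mul_one, hUU, hspec]
  have hdet : (1 + M).det = ∏ i, (1 + hH.eigenvalues i) := by
    rw [h1M, Matrix.det_mul_right_comm, hUU, Matrix.one_mul]
    have : (1 : Matrix (Fin n) (Fin n) ℝ) + D = Matrix.diagonal (fun i => 1 + hH.eigenvalues i) := by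
      rw [hD, ← Matrix.diagonal_one, Matrix.diagonal_add]
      rfl
    rw [this, Matrix.det_diagonal]
  have htr : M.trace = ∑ i, hH.eigenvalues i := by
    conv_lhs => rw [hspec]
    rw [Matrix.trace_mul_cycle, hUU', Matrix.one_mul, hD, Matrix.trace_diagonal]
    rfl
  rw [hdet, htr]
  exact aux_one_add_sum_le_prod fun i => hM.eigenvalues_nonneg i

/-- Determinant inequality underlying strict ellipticity: for symmetric matrices with
`0 < Q - S ≤ Θ I` and `Q' ≥ Q`, one has
`det(Q' - S) ≥ det(Q - S) (1 + Θ⁻¹ tr(Q' - Q))`. -/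
theorem stmt3 {n : ℕ} (Q Q' S : Matrix (Fin n) (Fin n) ℝ) (Θ : ℝ) (hΘ : 0 < Θ)
    (hQ : Q.IsSymm) (hQ' : Q'.IsSymm) (hS : S.IsSymm)
    (h1 : (Q - S).PosDef)
    (h2 : (Θ • (1 : Matrix (Fin n) (Fin n) ℝ) - (Q - S)).PosSemidef)
    (h3 : (Q' - Q).PosSemidef) :
    (Q - S).det * (1 + Θ⁻¹ * (Q' - Q).trace) ≤ (Q' - S).det := by
  classical
  set A := Q - S with hA
  set B := Q' - Q with hB
  have hAB : Q' - S = A + B := by rw [hA, hB]; abel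
  set R := (open scoped MatrixOrder in CFC.sqrt A) with hRdef
  have hRR : R * R = A := by open scoped MatrixOrder in exact CFC.sqrt_mul_sqrt_self A h1.posSemidef.nonneg
  have hRpsd : R.PosSemidef := by open scoped MatrixOrder in exact (CFC.sqrt_nonneg A).posSemidef
  have hRH : Rᴴ = R := hRpsd.1
  have hdetA : 0 < A.det := h1.det_pos
  have hdetR : R.det ≠ 0 := by
    intro h
    rw [← hRR, Matrix.det_mul, h, mul_zero] at hdetA
    exact lt_irrefl _ hdetA
  have hRunit : IsUnit R.det := isUnit_iff_ne_zero.mpr hdetR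
  have hRinv : R * R⁻¹ = 1 := Matrix.mul_nonsing_inv R hRunit
  have hRinv' : R⁻¹ * R = 1 := Matrix.nonsing_inv_mul R hRunit
  have hRinvH : (R⁻¹)ᴴ = R⁻¹ := by rw [Matrix.conjTranspose_nonsing_inv, hRH]
  set M := R⁻¹ * B * R⁻¹ with hM
  have hMpsd : M.PosSemidef := by
    have := h3.mul_mul_conjTranspose_same R⁻¹
    rwa [hRinvH] at this
  -- decomposition
  have hdecomp : A + B = R * (1 + M) * R := by
    rw [Matrix.mul_add, Matrix.add_mul, Matrix.mul_one, hRR, hM]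
    congr 1
    symm
    calc R * (R⁻¹ * B * R⁻¹) * R = R * (R⁻¹ * (B * (R⁻¹ * R))) := by
          simp only [Matrix.mul_assoc]
      _ = B := by rw [hRinv', Matrix.mul_one, ← Matrix.mul_assoc, hRinv, Matrix.one_mul]
  have hdet : (A + B).det = A.det * (1 + M).det := by
    rw [hdecomp, Matrix.det_mul, Matrix.det_mul, ← hRR, Matrix.det_mul]
    ring
  -- trace bound : Θ⁻¹ * B.trace ≤ M.trace
  set C := Θ • (R⁻¹ * R⁻¹) - 1 with hC
  have hCpsd : C.PosSemidef := by
    have h := h2.mul_mul_conjTranspose_same R⁻¹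
    rw [hRinvH] at h
    have : R⁻¹ * (Θ • (1 : Matrix (Fin n) (Fin n) ℝ) - A) * R⁻¹ = C := by
      rw [Matrix.mul_sub, Matrix.sub_mul, hC]
      congr 1
      · rw [Matrix.mul_smul, Matrix.mul_one, Matrix.smul_mul]
      · rw [← hRR]
        calc R⁻¹ * (R * R) * R⁻¹ = (R⁻¹ * R) * (R * R⁻¹) := by simp only [Matrix.mul_assoc]
          _ = 1 := by rw [hRinv, hRinv', Matrix.one_mul]
    rwa [this] at h
  set T := (open scoped MatrixOrder in CFC.sqrt B) with hT
  have hTT : T * T = B := by open scoped MatrixOrder in exact CFC.sqrt_mul_sqrt_self B h3.nonneg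
  have hTH : Tᴴ = T := by open scoped MatrixOrder in exact (CFC.sqrt_nonneg B).posSemidef.1
  have hCB : 0 ≤ (C * B).trace := by
    have hpsd : (T * C * Tᴴ).PosSemidef := hCpsd.mul_mul_conjTranspose_same T
    rw [hTH] at hpsd
    have := aux_trace_nonneg hpsd
    rwa [Matrix.trace_mul_cycle, hTT, Matrix.trace_mul_comm] at this
  have htrM : M.trace = ((R⁻¹ * R⁻¹) * B).trace := by
    rw [hM, Matrix.trace_mul_cycle, Matrix.mul_assoc]
  have hCBtr : (C * B).trace = Θ * ((R⁻¹ * R⁻¹) * B).trace - B.trace := by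
    rw [hC, Matrix.sub_mul, Matrix.trace_sub, Matrix.smul_mul, Matrix.trace_smul,
      Matrix.one_mul, smul_eq_mul]
  have htrace_bound : Θ⁻¹ * B.trace ≤ M.trace := by
    rw [htrM]
    rw [hCBtr] at hCB
    rw [inv_mul_le_iff₀ hΘ]
    linarith
  -- combine
  have hkey : 1 + Θ⁻¹ * B.trace ≤ (1 + M).det := by
    calc 1 + Θ⁻¹ * B.trace ≤ 1 + M.trace := by linarith
      _ ≤ (1 + M).det := aux_det_one_add hMpsd
  calc A.det * (1 + Θ⁻¹ * B.trace) ≤ A.det * (1 + M).det :=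
        mul_le_mul_of_nonneg_left hkey (le_of_lt hdetA)
    _ = (A + B).det := hdet.symm
    _ = (Q' - S).det := by rw [hAB]
end

section
/- Under the hypotheses of the ellipticity lemma, suppose additionally $G_2(y,p,Q) > 0$ and there exists $\Theta > 0$ with $Q - D^2_{yy}s(x,y) \le \Theta I$ for all $x \in X_2(y,p,Q)$. Then for all symmetric $Q' \ge Q$: $G_2(y,p,Q') - G_2(y,p,Q) \ge \frac{G_2(y,p,Q)}{\Theta} \operatorname{tr}[Q' - Q]$. -/
open MeasureTheory Set Matrix
open scoped MatrixOrder

set_option linter.unusedSectionVars false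
set_option linter.unusedVariables false
set_option maxHeartbeats 1000000

section AuxMatrix

variable {k : Type*} [Fintype k] [DecidableEq k]


lemma aux_prod_one_add {ι : Type*} (s : Finset ι) (f : ι → ℝ)
    (h : ∀ i ∈ s, 0 ≤ f i) : 1 + ∑ i ∈ s, f i ≤ ∏ i ∈ s, (1 + f i) := by
  induction s using Finset.cons_induction with
  | empty => simp
  | cons a s ha ih =>
    rw [Finset.sum_cons, Finset.prod_cons]
    have h1 : 0 ≤ f a := h a (Finset.mem_cons_self a s)
    have h2 : ∀ i ∈ s, 0 ≤ f i := fun i hi => h i (Finset.mem_cons_of_mem hi)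
    have h3 := ih h2
    have h4 : 0 ≤ ∑ i ∈ s, f i := Finset.sum_nonneg h2
    nlinarith



lemma aux_trace_eq {A : Matrix k k ℝ} (hA : A.IsHermitian) :
    A.trace = ∑ i, hA.eigenvalues i := by
  simp [hA.trace_eq_sum_eigenvalues]


lemma aux_psd_trace_nonneg {A : Matrix k k ℝ} (hA : A.PosSemidef) : 0 ≤ A.trace := by
  rw [aux_trace_eq hA.1]
  exact Finset.sum_nonneg fun i _ => hA.eigenvalues_nonneg i


lemma aux_det_nonneg {A : Matrix k k ℝ} (hA : A.PosSemidef) : 0 ≤ A.det := by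
  rw [hA.1.det_eq_prod_eigenvalues]
  exact Finset.prod_nonneg fun i _ => by simpa using hA.eigenvalues_nonneg i


lemma aux_trace_mul_nonneg {A B : Matrix k k ℝ} (hA : A.PosSemidef) (hB : B.PosSemidef) :
    0 ≤ (A * B).trace := by
  obtain ⟨C, rfl⟩ := CStarAlgebra.nonneg_iff_eq_star_mul_self.mp hA.nonneg
  rw [Matrix.mul_assoc, Matrix.trace_mul_comm]
  exact aux_psd_trace_nonneg (hB.mul_mul_conjTranspose_same C)


lemma aux_smul_psd {A : Matrix k k ℝ} {c : ℝ} (hc : 0 ≤ c) (hA : A.PosSemidef) :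
    (c • A).PosSemidef := by
  constructor
  · unfold Matrix.IsHermitian
    rw [Matrix.conjTranspose_smul, hA.1]
    simp
  · intro x
    exact (hA.smul hc).2 x


lemma aux_det_one_add_s6 {N : Matrix k k ℝ} (hN : N.PosSemidef) :
    1 + N.trace ≤ (1 + N).det := by
  have hH := hN.1
  set U : Matrix k k ℝ := (Matrix.IsHermitian.eigenvectorUnitary hH : Matrix k k ℝ) with hUdef
  set D : Matrix k k ℝ := Matrix.diagonal (RCLike.ofReal ∘ hH.eigenvalues) with hDdef
  have hU : U * star U = 1 :=
    Matrix.mem_unitaryGroup_iff.mp (Matrix.IsHermitian.eigenvectorUnitary hH).2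
  have h1 : (1 : Matrix k k ℝ) + N = U * (1 + D) * star U := by
    rw [Matrix.mul_add, Matrix.mul_one, Matrix.add_mul, hU]
    congr 1
    exact hH.spectral_theorem
  have h2 : (1 + N).det = (1 + D).det := by
    rw [h1, Matrix.det_mul_right_comm, hU, Matrix.one_mul]
  have h3 : (1 : Matrix k k ℝ) + D = Matrix.diagonal (fun i => 1 + hH.eigenvalues i) := by
    rw [hDdef, ← Matrix.diagonal_one, Matrix.diagonal_add]
    rfl
  rw [h2, h3, Matrix.det_diagonal, aux_trace_eq hH]
  exact aux_prod_one_add Finset.univ _ fun i _ => hN.eigenvalues_nonneg i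


lemma aux_inv_order {M : Matrix k k ℝ} (hM : M.PosDef) {Θ : ℝ} (hΘ : 0 < Θ)
    (hMΘ : (Θ • (1 : Matrix k k ℝ) - M).PosSemidef) :
    (M⁻¹ - Θ⁻¹ • (1 : Matrix k k ℝ)).PosSemidef := by
  have hMinv : M⁻¹.PosDef := hM.inv
  set B : Matrix k k ℝ := CFC.sqrt M⁻¹ with hBdef
  have hB : B.PosSemidef := (CFC.sqrt_nonneg M⁻¹).posSemidef
  have hBB : B * B = M⁻¹ := CFC.sqrt_mul_sqrt_self M⁻¹ hMinv.posSemidef.nonneg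
  have hdetM : IsUnit M.det := isUnit_iff_ne_zero.mpr hM.det_pos.ne'
  have hdetB : IsUnit B.det := by
    have h : B.det * B.det = M⁻¹.det := by rw [← Matrix.det_mul, hBB]
    refine isUnit_iff_ne_zero.mpr fun h0 => ?_
    rw [h0, mul_zero] at h
    exact hMinv.det_pos.ne' h.symm
  have hBMB : B * M * B = 1 := by
    have hM' : M = B⁻¹ * B⁻¹ := by
      rw [← Matrix.mul_inv_rev, hBB, Matrix.nonsing_inv_nonsing_inv _ hdetM]
    rw [hM', Matrix.mul_nonsing_inv_cancel_left _ _ hdetB, Matrix.nonsing_inv_mul _ hdetB]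
  have hconj : (B * (Θ • (1 : Matrix k k ℝ) - M) * Bᴴ).PosSemidef :=
    hMΘ.mul_mul_conjTranspose_same B
  have hBH : Bᴴ = B := hB.1
  have hcalc : B * (Θ • (1 : Matrix k k ℝ) - M) * Bᴴ = Θ • M⁻¹ - 1 := by
    rw [hBH, Matrix.mul_sub, Matrix.sub_mul, mul_smul_comm, Matrix.mul_one, smul_mul_assoc,
      hBB, hBMB]
  rw [hcalc] at hconj
  have hfinal : M⁻¹ - Θ⁻¹ • (1 : Matrix k k ℝ) = Θ⁻¹ • (Θ • M⁻¹ - 1) := by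
    rw [smul_sub, smul_smul, inv_mul_cancel₀ hΘ.ne', one_smul]
  rw [hfinal]
  exact aux_smul_psd (inv_nonneg.mpr hΘ.le) hconj


lemma aux_det_ineq {M P : Matrix k k ℝ} (hM : M.PosSemidef) (hP : P.PosSemidef)
    {Θ : ℝ} (hΘ : 0 < Θ) (hMΘ : (Θ • (1 : Matrix k k ℝ) - M).PosSemidef) :
    M.det * (1 + P.trace / Θ) ≤ (M + P).det := by
  rcases (aux_det_nonneg hM).eq_or_lt with hdet | hdet
  · rw [← hdet, zero_mul]
    exact aux_det_nonneg (hM.add hP)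
  · -- M is positive definite
    have hMd : M.PosDef := by
      exact hM.posDef_iff_det_ne_zero.mpr hdet.ne'
    have hdetM : IsUnit M.det := isUnit_iff_ne_zero.mpr hdet.ne'
    set B : Matrix k k ℝ := CFC.sqrt M with hBdef
    have hB : B.PosSemidef := (CFC.sqrt_nonneg M).posSemidef
    have hBB : B * B = M := CFC.sqrt_mul_sqrt_self M hM.nonneg
    have hdetB : IsUnit B.det := by
      have h : B.det * B.det = M.det := by rw [← Matrix.det_mul, hBB]
      refine isUnit_iff_ne_zero.mpr fun h0 => ?_
      rw [h0, mul_zero] at h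
      exact hdet.ne' h.symm
    have hBinvH : (B⁻¹)ᴴ = B⁻¹ := by rw [Matrix.conjTranspose_nonsing_inv, hB.1]
    set N : Matrix k k ℝ := B⁻¹ * P * B⁻¹ with hNdef
    have hN : N.PosSemidef := by
      have := hP.mul_mul_conjTranspose_same B⁻¹
      rwa [hBinvH] at this
    have hMP : M + P = B * (1 + N) * B := by
      rw [Matrix.mul_add, Matrix.mul_one, Matrix.add_mul, hBB, hNdef]
      congr 1
      rw [← Matrix.mul_assoc, ← Matrix.mul_assoc, Matrix.mul_nonsing_inv _ hdetB,
        Matrix.one_mul, Matrix.mul_assoc, Matrix.nonsing_inv_mul _ hdetB, Matrix.mul_one]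
    have hdetMP : (M + P).det = M.det * (1 + N).det := by
      rw [hMP, Matrix.det_mul_right_comm, hBB, Matrix.det_mul]
    have htrN : N.trace = (P * M⁻¹).trace := by
      rw [hNdef, Matrix.trace_mul_cycle, ← Matrix.mul_inv_rev, hBB, Matrix.trace_mul_comm]
    have hineq1 : P.trace / Θ ≤ N.trace := by
      have h1 : 0 ≤ (P * (M⁻¹ - Θ⁻¹ • (1 : Matrix k k ℝ))).trace :=
        aux_trace_mul_nonneg hP (aux_inv_order hMd hΘ hMΘ)
      rw [Matrix.mul_sub, Matrix.trace_sub, mul_smul_comm, Matrix.mul_one,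
        Matrix.trace_smul, sub_nonneg] at h1
      rw [htrN, div_eq_inv_mul]
      simpa using h1
    have hdet1N : 1 + N.trace ≤ (1 + N).det := aux_det_one_add_s6 hN
    rw [hdetMP]
    have hstep : 1 + P.trace / Θ ≤ (1 + N).det := by linarith
    exact mul_le_mul_of_nonneg_left hstep hdet.le


end AuxMatrix


lemma aux_ae_nonneg {α : Type*} [MeasurableSpace α] (μ : Measure α) (s : Set α)
    (f : α → ℝ) (hf : AEStronglyMeasurable f (μ.restrict s))
    (h : ∀ x ∈ s, 0 ≤ f x) : 0 ≤ᵐ[μ.restrict s] f := by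
  obtain ⟨g, hgm, hfg⟩ := hf
  have hmeas : MeasurableSet {x | g x < 0} := measurableSet_lt hgm.measurable measurable_const
  have hne : μ.restrict s {x | ¬ f x = g x} = 0 := ae_iff.mp hfg
  have hsubset : {x | g x < 0} ∩ s ⊆ {x | ¬ f x = g x} ∩ s := by
    intro x hx
    refine ⟨fun heq => ?_, hx.2⟩
    exact absurd (heq ▸ h x hx.2) (not_le.mpr hx.1)
  have hg0 : μ.restrict s {x | g x < 0} = 0 := by
    rw [Measure.restrict_apply hmeas]
    refine le_antisymm (le_trans (measure_mono hsubset) ?_) zero_le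
    calc μ ({x | ¬ f x = g x} ∩ s) ≤ μ.restrict s {x | ¬ f x = g x} :=
          Measure.le_restrict_apply _ _
      _ = 0 := hne
  have hgae : ∀ᵐ x ∂μ.restrict s, 0 ≤ g x := by
    rw [ae_iff]
    simpa only [not_le] using hg0
  filter_upwards [hgae, hfg] with x h1 h2
  rw [Pi.zero_apply]
  rw [h2]
  exact h1


/-- Strict ellipticity of `G₂` with ellipticity constant `λ = G₂(y,p,Q)/Θ`: if
`G₂(y,p,Q) > 0` and `Q - D²_yy s(x,y) ≤ Θ I` on `X₂(y,p,Q)`, then for all symmetric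
`Q' ≥ Q`, `G₂(y,p,Q') - G₂(y,p,Q) ≥ (G₂(y,p,Q)/Θ) tr(Q' - Q)`. -/
theorem stmt6 {m n : ℕ}
    (X : Set (EuclideanSpace ℝ (Fin m)))
    (Dys : EuclideanSpace ℝ (Fin m) → EuclideanSpace ℝ (Fin n))
    (S : EuclideanSpace ℝ (Fin m) → Matrix (Fin n) (Fin n) ℝ)
    (w : EuclideanSpace ℝ (Fin m) → ℝ) (hw : ∀ x, 0 ≤ w x)
    (p : EuclideanSpace ℝ (Fin n))
    (Q Q' : Matrix (Fin n) (Fin n) ℝ)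
    (hQ : Q.IsSymm) (hQ' : Q'.IsSymm)
    (hQQ' : (Q' - Q).PosSemidef)
    (Θ : ℝ) (hΘ : 0 < Θ)
    (hbd : ∀ x ∈ {x ∈ X | Dys x = p ∧ (Q - S x).PosSemidef},
      (Θ • (1 : Matrix (Fin n) (Fin n) ℝ) - (Q - S x)).PosSemidef)
    (hintQ : IntegrableOn (fun x => (Q - S x).det * w x)
      {x ∈ X | Dys x = p ∧ (Q - S x).PosSemidef}
      (μH[(m - n : ℝ)] : Measure (EuclideanSpace ℝ (Fin m))))
    (hintQ' : IntegrableOn (fun x => (Q' - S x).det * w x)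
      {x ∈ X | Dys x = p ∧ (Q' - S x).PosSemidef}
      (μH[(m - n : ℝ)] : Measure (EuclideanSpace ℝ (Fin m))))
    (hpos : 0 < ∫ x in {x ∈ X | Dys x = p ∧ (Q - S x).PosSemidef},
      (Q - S x).det * w x ∂(μH[(m - n : ℝ)] : Measure (EuclideanSpace ℝ (Fin m)))) :
    (∫ x in {x ∈ X | Dys x = p ∧ (Q - S x).PosSemidef},
        (Q - S x).det * w x
        ∂(μH[(m - n : ℝ)] : Measure (EuclideanSpace ℝ (Fin m)))) / Θ * (Q' - Q).trace ≤
    (∫ x in {x ∈ X | Dys x = p ∧ (Q' - S x).PosSemidef},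
        (Q' - S x).det * w x
        ∂(μH[(m - n : ℝ)] : Measure (EuclideanSpace ℝ (Fin m)))) -
    ∫ x in {x ∈ X | Dys x = p ∧ (Q - S x).PosSemidef},
        (Q - S x).det * w x
        ∂(μH[(m - n : ℝ)] : Measure (EuclideanSpace ℝ (Fin m))) := by
  set μ : Measure (EuclideanSpace ℝ (Fin m)) := μH[(m - n : ℝ)] with hμ
  set A : Set (EuclideanSpace ℝ (Fin m)) := {x ∈ X | Dys x = p ∧ (Q - S x).PosSemidef} with hA
  set A' : Set (EuclideanSpace ℝ (Fin m)) := {x ∈ X | Dys x = p ∧ (Q' - S x).PosSemidef} with hA'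
  set f : EuclideanSpace ℝ (Fin m) → ℝ := fun x => (Q - S x).det * w x with hf
  set F : EuclideanSpace ℝ (Fin m) → ℝ := fun x => (Q' - S x).det * w x with hF
  set τ : ℝ := (Q' - Q).trace with hτdef
  have hτ : 0 ≤ τ := by
    have := aux_trace_mul_nonneg hQQ' (Matrix.PosSemidef.one)
    rwa [Matrix.mul_one] at this
  -- A ⊆ A'
  have hsub : A ⊆ A' := by
    intro x hx
    obtain ⟨hx1, hx2, hx3⟩ := hx
    refine ⟨hx1, hx2, ?_⟩
    have heq : Q' - S x = (Q - S x) + (Q' - Q) := by abel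
    rw [heq]
    exact hx3.add hQQ'
  -- pointwise inequality on A
  have hkey : ∀ x ∈ A, (1 + τ / Θ) * f x ≤ F x := by
    intro x hx
    obtain ⟨hx1, hx2, hx3⟩ := hx
    have hdet := aux_det_ineq hx3 hQQ' hΘ (hbd x ⟨hx1, hx2, hx3⟩)
    have heq : Q - S x + (Q' - Q) = Q' - S x := by abel
    rw [heq] at hdet
    have := mul_le_mul_of_nonneg_right hdet (hw x)
    calc (1 + τ / Θ) * f x = (Q - S x).det * (1 + τ / Θ) * w x := by rw [hf]; ring
      _ ≤ (Q' - S x).det * w x := this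
      _ = F x := rfl
  -- nonnegativity of F on A'
  have hFnn : ∀ x ∈ A', 0 ≤ F x := by
    intro x hx
    exact mul_nonneg (aux_det_nonneg hx.2.2) (hw x)
  -- integrability
  have hFintA : IntegrableOn F A μ := hintQ'.mono_set hsub
  have hfintA : IntegrableOn (fun x => (1 + τ / Θ) * f x) A μ := hintQ.const_mul _
  -- step A
  have hstepA : ∫ x in A, (1 + τ / Θ) * f x ∂μ ≤ ∫ x in A, F x ∂μ := by
    refine integral_mono_ae hfintA hFintA ?_
    have hsm : AEStronglyMeasurable (fun x => F x - (1 + τ / Θ) * f x) (μ.restrict A) :=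
      (hFintA.sub hfintA).aestronglyMeasurable
    have := aux_ae_nonneg μ A _ hsm (fun x hx => sub_nonneg.mpr (hkey x hx))
    filter_upwards [this] with x hx
    simpa [sub_nonneg] using hx
  -- step B
  have hstepB : ∫ x in A, F x ∂μ ≤ ∫ x in A', F x ∂μ := by
    refine setIntegral_mono_set hintQ' ?_ (HasSubset.Subset.eventuallyLE hsub)
    exact aux_ae_nonneg μ A' F hintQ'.aestronglyMeasurable hFnn
  have hconst : ∫ x in A, (1 + τ / Θ) * f x ∂μ = (1 + τ / Θ) * ∫ x in A, f x ∂μ :=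
    integral_const_mul _ _
  have hG : (1 + τ / Θ) * ∫ x in A, f x ∂μ ≤ ∫ x in A', F x ∂μ := by
    rw [← hconst]; exact le_trans hstepA hstepB
  have hGpos : 0 < ∫ x in A, f x ∂μ := hpos
  have heq2 : (∫ x in A, f x ∂μ) / Θ * τ = (1 + τ / Θ) * (∫ x in A, f x ∂μ) - ∫ x in A, f x ∂μ := by
    field_simp
    ring
  linarith [hG, heq2]
end

section
/- Let $v : Y \to \mathbb{R}$ with $Y \subset \mathbb{R}^n$ open, and let $s \in C^2(X \times \bar Y)$. Suppose at $(x,y) \in X \times Y$ the matrix $D^2 v(y) - D^2_{yy} s(x,y)$ is positive definite, $v$ is twice differentiable at $y$, and $y$ lies in the contact set $\partial_s u(x) := \{y' \in \bar Y : u(x) + v(y') = s(x,y')\}$ where $u = v^s$. Then there is no $C^1$ curve $t \in [0,1] \mapsto y(t) \in \partial_s u(x)$ with $y(0) = y$ and $y'(0) \ne 0$; i.e., $y$ is an isolated point among $C^1$ curves in $\partial_s u(x)$. -/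
open Set Topology Asymptotics Filter

set_option maxHeartbeats 1000000

/-- If `D²v(y) - D²_yy s(x,y)` is positive definite at a contact point `y ∈ ∂_s u(x)`, then
no `C¹` curve inside the contact set can depart from `y` with nonzero velocity. -/
theorem stmt12 {m n : ℕ}
    (X : Set (EuclideanSpace ℝ (Fin m))) (Y : Set (EuclideanSpace ℝ (Fin n)))
    (hY : IsOpen Y)
    (s : EuclideanSpace ℝ (Fin m) → EuclideanSpace ℝ (Fin n) → ℝ)
    (u : EuclideanSpace ℝ (Fin m) → ℝ) (v : EuclideanSpace ℝ (Fin n) → ℝ)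
    (x : EuclideanSpace ℝ (Fin m)) (y : EuclideanSpace ℝ (Fin n))
    (hx : x ∈ X) (hy : y ∈ Y)
    (hge : ∀ y' ∈ closure Y, s x y' - v y' ≤ u x)
    (hcontact : u x + v y = s x y)
    (pv ps : EuclideanSpace ℝ (Fin n) →L[ℝ] ℝ)
    (Q S : EuclideanSpace ℝ (Fin n) →L[ℝ] EuclideanSpace ℝ (Fin n) →L[ℝ] ℝ)
    (hv : (fun y' => v y' - v y - pv (y' - y) - (1 / 2) * Q (y' - y) (y' - y))
        =o[𝓝 y] fun y' => ‖y' - y‖ ^ 2)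
    (hsT : (fun y' => s x y' - s x y - ps (y' - y) - (1 / 2) * S (y' - y) (y' - y))
        =o[𝓝 y] fun y' => ‖y' - y‖ ^ 2)
    (hpd : ∀ w : EuclideanSpace ℝ (Fin n), w ≠ 0 → 0 < Q w w - S w w) :
    ¬ ∃ (γ : ℝ → EuclideanSpace ℝ (Fin n)) (ydot : EuclideanSpace ℝ (Fin n)),
      ContDiffOn ℝ 1 γ (Set.Icc 0 1) ∧ γ 0 = y ∧
      (∀ t ∈ Set.Icc (0 : ℝ) 1, γ t ∈ closure Y ∧ u x + v (γ t) = s x (γ t)) ∧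
      HasDerivWithinAt γ ydot (Set.Icc 0 1) 0 ∧ ydot ≠ 0 := by
  rintro ⟨γ, ydot, hγC, hγ0, hmem, hderiv, hne⟩
  set f : EuclideanSpace ℝ (Fin n) → ℝ := fun y' => v y' - s x y' with hf
  set p : EuclideanSpace ℝ (Fin n) →L[ℝ] ℝ := pv - ps with hp
  set B : EuclideanSpace ℝ (Fin n) →L[ℝ] EuclideanSpace ℝ (Fin n) →L[ℝ] ℝ := Q - S with hB
  -- combined second-order expansion of f at y
  have hexp : (fun y' => f y' - f y - p (y' - y) - (1 / 2) * B (y' - y) (y' - y))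
      =o[𝓝 y] fun y' => ‖y' - y‖ ^ 2 := by
    have h0 := hv.sub hsT
    refine h0.congr_left fun y' => ?_
    simp only [hf, hp, hB, ContinuousLinearMap.sub_apply, ContinuousLinearMap.coe_sub', Pi.sub_apply]
    ring
  -- y is a local minimum of f
  have hmin : IsLocalMin f y := by
    filter_upwards [hY.mem_nhds hy] with y' hy'
    have h1 := hge y' (subset_closure hy')
    simp only [hf]
    linarith
  -- f is differentiable at y with derivative p
  have hquad : (fun y' => (1 / 2) * B (y' - y) (y' - y)) =O[𝓝 y] fun y' => ‖y' - y‖ ^ 2 := by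
    apply Asymptotics.IsBigO.of_bound (1 / 2 * ‖B‖)
    filter_upwards with y'
    have hb := B.le_opNorm₂ (y' - y) (y' - y)
    have h1 : ‖B (y' - y) (y' - y)‖ ≤ ‖B‖ * ‖y' - y‖ * ‖y' - y‖ := hb
    rw [Real.norm_eq_abs, Real.norm_eq_abs, abs_mul]
    rw [Real.norm_eq_abs] at h1
    have h2 : |(1 : ℝ) / 2| = 1 / 2 := by norm_num
    have h3 : |‖y' - y‖ ^ 2| = ‖y' - y‖ ^ 2 := abs_of_nonneg (by positivity)
    rw [h2, h3]
    nlinarith [norm_nonneg (y' - y), abs_nonneg (B (y' - y) (y' - y))]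
  have hsq : (fun y' : EuclideanSpace ℝ (Fin n) => ‖y' - y‖ ^ 2) =o[𝓝 y] fun y' => y' - y := by
    rw [← Asymptotics.isLittleO_norm_right]
    rw [Asymptotics.isLittleO_iff]
    intro c hc
    have htn : Tendsto (fun y' : EuclideanSpace ℝ (Fin n) => ‖y' - y‖) (𝓝 y) (𝓝 0) := by
      have : Tendsto (fun y' : EuclideanSpace ℝ (Fin n) => y' - y) (𝓝 y) (𝓝 (y - y)) :=
        (continuous_id.sub continuous_const).tendsto y
      simpa using this.norm
    filter_upwards [htn.eventually_le_const (by linarith : (0:ℝ) < c) |>.mono fun _ h => h] with y' h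
    rw [Real.norm_eq_abs, abs_of_nonneg (by positivity : (0:ℝ) ≤ ‖y' - y‖ ^ 2), Real.norm_eq_abs,
      abs_of_nonneg (norm_nonneg _), sq]
    exact mul_le_mul_of_nonneg_right h (norm_nonneg _)
  have hder : HasFDerivAt f p y := by
    have h1 : (fun y' => f y' - f y - p (y' - y)) =O[𝓝 y] fun y' => ‖y' - y‖ ^ 2 := by
      have h2 := hexp.isBigO.add hquad
      refine h2.congr_left fun y' => by ring
    exact hasFDerivAt_iff_isLittleO.2 (h1.trans_isLittleO hsq)
  have hp0 : p = 0 := hmin.hasFDerivAt_eq_zero hder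
  have hexp' : (fun y' => f y' - f y - (1 / 2) * B (y' - y) (y' - y))
      =o[𝓝 y] fun y' => ‖y' - y‖ ^ 2 := by
    refine hexp.congr_left fun y' => ?_
    rw [hp0]
    simp
  -- setup the filter along the curve
  set L := 𝓝[>] (0 : ℝ) with hLdef
  have hL : L ≤ 𝓝[Icc (0 : ℝ) 1] 0 := by
    rw [hLdef, ← nhdsWithin_Ioc_eq_nhdsGT (zero_lt_one (α := ℝ))]
    exact nhdsWithin_mono _ Ioc_subset_Icc_self
  have htend : Tendsto γ L (𝓝 y) := by
    have h1 : ContinuousWithinAt γ (Icc (0:ℝ) 1) 0 := hderiv.continuousWithinAt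
    rw [ContinuousWithinAt, hγ0] at h1
    exact h1.mono_left hL
  have hr : (fun t => γ t - y - t • ydot) =o[L] fun t : ℝ => t := by
    have h1 := hasDerivWithinAt_iff_isLittleO.1 hderiv
    rw [hγ0] at h1
    have h2 : (fun t => γ t - y - t • ydot) =o[𝓝[Icc (0:ℝ) 1] 0] fun t : ℝ => t := by
      refine (h1.congr_left fun t => by rw [sub_zero]).congr_right fun t => by rw [sub_zero]
    exact h2.mono hL
  have hfγ : ∀ᶠ t in L, f (γ t) = f y := by
    filter_upwards [hL self_mem_nhdsWithin] with t ht
    have h1 := (hmem t ht).2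
    simp only [hf]
    linarith
  -- compose the expansion with the curve
  have hC0 := hexp'.comp_tendsto htend
  have hC : (fun t => B (γ t - y) (γ t - y)) =o[L] fun t => ‖γ t - y‖ ^ 2 := by
    have h1 : (fun t => -(1 / 2 : ℝ) * B (γ t - y) (γ t - y)) =o[L] fun t => ‖γ t - y‖ ^ 2 := by
      refine hC0.congr' ?_ EventuallyEq.rfl
      filter_upwards [hfγ] with t ht
      simp only [Function.comp]
      rw [ht]; ring
    have h2 := h1.const_mul_left (-2 : ℝ)
    refine h2.congr_left fun t => by ring
  -- ‖γ t - y‖² = O(t²)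
  have hsm : (fun t : ℝ => t • ydot) =O[L] fun t : ℝ => t := by
    apply Asymptotics.IsBigO.of_bound ‖ydot‖
    filter_upwards with t
    rw [norm_smul]
    exact le_of_eq (mul_comm _ _)
  have hO : (fun t => γ t - y) =O[L] fun t : ℝ => t := by
    have h1 := hsm.add hr.isBigO
    refine h1.congr_left fun t => by abel
  have hO2 : (fun t => ‖γ t - y‖ ^ 2) =O[L] fun t : ℝ => t ^ 2 := hO.norm_left.pow 2
  have hC2 : (fun t => B (γ t - y) (γ t - y)) =o[L] fun t : ℝ => t ^ 2 := hC.trans_isBigO hO2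
  have hdiv : Tendsto (fun t => B (γ t - y) (γ t - y) / t ^ 2) L (𝓝 0) :=
    hC2.tendsto_div_nhds_zero
  -- rescaled curve tends to ydot
  have hrt : Tendsto (fun t : ℝ => t⁻¹ • (γ t - y - t • ydot)) L (𝓝 0) := by
    have h1 : Tendsto (fun t : ℝ => ‖γ t - y - t • ydot‖ / t) L (𝓝 0) :=
      hr.norm_left.tendsto_div_nhds_zero
    apply squeeze_zero_norm' _ h1
    filter_upwards [self_mem_nhdsWithin] with t (ht : t ∈ Ioi (0:ℝ))
    rw [norm_smul, norm_inv, Real.norm_eq_abs, abs_of_pos ht, inv_mul_eq_div]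
  have hw : Tendsto (fun t : ℝ => t⁻¹ • (γ t - y)) L (𝓝 ydot) := by
    have h1 : Tendsto (fun t : ℝ => ydot + t⁻¹ • (γ t - y - t • ydot)) L (𝓝 (ydot + 0)) :=
      tendsto_const_nhds.add hrt
    rw [add_zero] at h1
    refine h1.congr' ?_
    filter_upwards [self_mem_nhdsWithin] with t (ht : t ∈ Ioi (0:ℝ))
    have ht' : t ≠ 0 := ne_of_gt ht
    rw [smul_sub, smul_smul, inv_mul_cancel₀ ht', one_smul]
    abel
  have gcont : Continuous fun w : EuclideanSpace ℝ (Fin n) => B w w := B.continuous.clm_apply continuous_id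
  have hBw : Tendsto (fun t : ℝ => B (t⁻¹ • (γ t - y)) (t⁻¹ • (γ t - y))) L (𝓝 (B ydot ydot)) :=
    (gcont.tendsto ydot).comp hw
  have hdiv' : Tendsto (fun t : ℝ => B (t⁻¹ • (γ t - y)) (t⁻¹ • (γ t - y))) L (𝓝 0) := by
    refine hdiv.congr' ?_
    filter_upwards [self_mem_nhdsWithin] with t (ht : t ∈ Ioi (0:ℝ))
    have ht' : t ≠ 0 := ne_of_gt ht
    have key : (B (t⁻¹ • (γ t - y))) (t⁻¹ • (γ t - y))
        = t⁻¹ * (t⁻¹ * (B (γ t - y)) (γ t - y)) := by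
      simp only [map_smul, ContinuousLinearMap.smul_apply, smul_eq_mul]
    rw [key]
    generalize (B (γ t - y)) (γ t - y) = c
    field_simp
  have hzero : B ydot ydot = 0 := tendsto_nhds_unique hBw hdiv'
  have hpos := hpd ydot hne
  rw [hB] at hzero
  simp only [ContinuousLinearMap.sub_apply, ContinuousLinearMap.coe_sub', Pi.sub_apply] at hzero
  linarith
end
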